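/- Under the hypotheses of the Lyapunov derivative formula, dE(μ(t))/dt = −(1/2)·u(t)ᵀ·S(μ'(t))·u(t), where S(ν) = A diag(ν) W⁻¹ Aᵀ and E(μ(t)) = (1/2)u(t)ᵀS(μ(t))u(t) with S(μ(t))u(t) = f for all t. -/

import Mathlib

open Matrix

lemma stmt9_diag_inv {k : ℕ} (w : Fin k → ℝ) (hw : ∀ e, w e ≠ 0) :
    (diagonal w)⁻¹ = diagonal (w⁻¹) := by
  apply Matrix.inv_eq_right_inv
  rw [Matrix.diagonal_mul_diagonal,
    show (fun i => w i * w⁻¹ i) = fun _ => (1:ℝ) from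
      funext fun e => mul_inv_cancel₀ (hw e), Matrix.diagonal_one]

lemma stmt9_key {n m : ℕ} (A : Matrix (Fin n) (Fin m) ℝ) (w ν : Fin m → ℝ)
    (hw : ∀ e, w e ≠ 0) (u₁ u₂ : Fin n → ℝ) :
    u₁ ⬝ᵥ (A * Matrix.diagonal ν * (Matrix.diagonal w)⁻¹ * Aᵀ).mulVec u₂ =
      ∑ e, ν e * (w e)⁻¹ * (Aᵀ.mulVec u₁ e * Aᵀ.mulVec u₂ e) := by
  rw [stmt9_diag_inv w hw, Matrix.mul_assoc (A * Matrix.diagonal ν), Matrix.mul_assoc A,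
    ← Matrix.mul_assoc (Matrix.diagonal ν), Matrix.diagonal_mul_diagonal, ← Matrix.mul_assoc A,
    ← Matrix.mulVec_mulVec, ← Matrix.mulVec_mulVec, Matrix.dotProduct_mulVec,
    ← Matrix.mulVec_transpose]
  simp only [Matrix.mulVec_diagonal, dotProduct, Pi.mul_apply, Pi.inv_apply]
  exact Finset.sum_congr rfl fun e _ => by ring

lemma stmt9_aux {m : ℕ} (w : Fin m → ℝ) (T t : ℝ) (μ μ' : ℝ → Fin m → ℝ)
    (v : ℝ → Fin m → ℝ) (v' : Fin m → ℝ)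
    (ht : t ∈ Set.Ico (0:ℝ) T)
    (hμ : ∀ e, HasDerivAt (fun s => μ s e) (μ' t e) t)
    (hv : ∀ e, HasDerivAt (fun s => v s e) (v' e) t)
    (hconst : ∀ s ∈ Set.Ico (0:ℝ) T,
      ∑ e, μ s e * (w e)⁻¹ * (v t e * v s e) = ∑ e, μ t e * (w e)⁻¹ * (v t e * v t e)) :
    HasDerivAt (fun s => (1/2 : ℝ) * ∑ e, μ s e * (w e)⁻¹ * (v s e * v s e))
      (-(1/2 : ℝ) * ∑ e, μ' t e * (w e)⁻¹ * (v t e * v t e)) t := by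
  have hψ : HasDerivAt (fun s => ∑ e, μ s e * (w e)⁻¹ * (v t e * v s e))
      (∑ e, (μ' t e * (w e)⁻¹ * (v t e * v t e) + μ t e * (w e)⁻¹ * (v t e * v' e))) t :=
    HasDerivAt.fun_sum fun e _ => ((hμ e).mul_const _).mul ((hv e).const_mul _)
  have hzero : (∑ e, (μ' t e * (w e)⁻¹ * (v t e * v t e)
      + μ t e * (w e)⁻¹ * (v t e * v' e))) = 0 := by
    have h1 := hψ.hasDerivWithinAt (s := Set.Ici t)
    have heq : (fun s => ∑ e, μ s e * (w e)⁻¹ * (v t e * v s e)) =ᶠ[nhdsWithin t (Set.Ici t)]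
        fun _ => ∑ e, μ t e * (w e)⁻¹ * (v t e * v t e) := by
      filter_upwards [inter_mem_nhdsWithin (Set.Ici t) (Iio_mem_nhds ht.2)] with s hs
      exact hconst s ⟨le_trans ht.1 hs.1, hs.2⟩
    have h2 : HasDerivWithinAt (fun s => ∑ e, μ s e * (w e)⁻¹ * (v t e * v s e)) 0
        (Set.Ici t) t :=
      (hasDerivWithinAt_const t (Set.Ici t) _).congr_of_eventuallyEq heq (hconst t ht)
    have e1 := h1.derivWithin (uniqueDiffOn_Ici t t Set.self_mem_Ici)
    have e2 := h2.derivWithin (uniqueDiffOn_Ici t t Set.self_mem_Ici)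
    rw [← e1, e2]
  have hφ : HasDerivAt (fun s => ∑ e, μ s e * (w e)⁻¹ * (v s e * v s e))
      (∑ e, (μ' t e * (w e)⁻¹ * (v t e * v t e)
        + μ t e * (w e)⁻¹ * (v' e * v t e + v t e * v' e))) t :=
    HasDerivAt.fun_sum fun e _ => ((hμ e).mul_const _).mul ((hv e).mul (hv e))
  have := hφ.const_mul (1/2 : ℝ)
  refine this.congr_deriv ?_
  rw [Finset.sum_add_distrib] at hzero
  have hsplit : ∑ e, (μ' t e * (w e)⁻¹ * (v t e * v t e)
      + μ t e * (w e)⁻¹ * (v' e * v t e + v t e * v' e))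
      = (∑ e, μ' t e * (w e)⁻¹ * (v t e * v t e))
        + 2 * ∑ e, μ t e * (w e)⁻¹ * (v t e * v' e) := by
    rw [Finset.sum_add_distrib, Finset.mul_sum]
    congr 1
    exact Finset.sum_congr rfl fun e _ => by ring
  rw [hsplit]
  linarith

/-- dE(μ(t))/dt = −(1/2) u(t)ᵀ S(μ'(t)) u(t) when S(μ(t))u(t) = f for all t. -/
theorem stmt_9 {n m : ℕ} (A : Matrix (Fin n) (Fin m) ℝ) (w : Fin m → ℝ)
    (f : Fin n → ℝ) (hw : ∀ e, 0 < w e)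
    (T : ℝ) (μ μ' : ℝ → Fin m → ℝ) (u u' : ℝ → Fin n → ℝ)
    (hpos : ∀ t ∈ Set.Ico (0 : ℝ) T, ∀ e, 0 < μ t e)
    (hμdiff : ∀ t ∈ Set.Ico (0 : ℝ) T, ∀ e,
      HasDerivAt (fun s => μ s e) (μ' t e) t)
    (hudiff : ∀ t ∈ Set.Ico (0 : ℝ) T, ∀ i,
      HasDerivAt (fun s => u s i) (u' t i) t)
    (hcons : ∀ t ∈ Set.Ico (0 : ℝ) T,
      (A * Matrix.diagonal (μ t) * (Matrix.diagonal w)⁻¹ * Aᵀ).mulVec (u t) = f) :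
    ∀ t ∈ Set.Ico (0 : ℝ) T,
      HasDerivAt
        (fun s => (1 / 2) * (u s ⬝ᵥ (A * Matrix.diagonal (μ s) *
            (Matrix.diagonal w)⁻¹ * Aᵀ).mulVec (u s)))
        (-(1 / 2) * (u t ⬝ᵥ (A * Matrix.diagonal (μ' t) *
            (Matrix.diagonal w)⁻¹ * Aᵀ).mulVec (u t))) t := by
  intro t ht
  have hw' : ∀ e, w e ≠ 0 := fun e => (hw e).ne'
  have hv : ∀ e, HasDerivAt (fun s => Aᵀ.mulVec (u s) e) (Aᵀ.mulVec (u' t) e) t := by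
    intro e
    show HasDerivAt (fun s => ∑ i, Aᵀ e i * u s i) (∑ i, Aᵀ e i * u' t i) t
    exact HasDerivAt.fun_sum fun i _ => (hudiff t ht i).const_mul _
  have hconst : ∀ s ∈ Set.Ico (0:ℝ) T,
      ∑ e, μ s e * (w e)⁻¹ * (Aᵀ.mulVec (u t) e * Aᵀ.mulVec (u s) e)
      = ∑ e, μ t e * (w e)⁻¹ * (Aᵀ.mulVec (u t) e * Aᵀ.mulVec (u t) e) := by
    intro s hs
    rw [← stmt9_key A w (μ s) hw' (u t) (u s), ← stmt9_key A w (μ t) hw' (u t) (u t),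
      hcons s hs, hcons t ht]
  have haux := stmt9_aux w T t μ μ' (fun s => Aᵀ.mulVec (u s)) (Aᵀ.mulVec (u' t)) ht
    (hμdiff t ht) hv hconst
  have hfun : (fun s => (1 / 2 : ℝ) * (u s ⬝ᵥ (A * Matrix.diagonal (μ s) *
      (Matrix.diagonal w)⁻¹ * Aᵀ).mulVec (u s)))
      = fun s => (1/2 : ℝ) * ∑ e, μ s e * (w e)⁻¹ * (Aᵀ.mulVec (u s) e * Aᵀ.mulVec (u s) e) :=
    funext fun s => by rw [stmt9_key A w (μ s) hw' (u s) (u s)]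
  rw [hfun, stmt9_key A w (μ' t) hw' (u t) (u t)]
  exact haux
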